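/- Let m be a positive integer, F = GF(2^m), let r ≥ 0, and let a₀, a₁, ..., a_r ∈ F be not all zero. Then the set of x ∈ F such that Tr(a₀·x·y + Σ_{t=1}^r a_t·(x·y^{2^t} + x^{2^t}·y)) = 0 for all y ∈ F has at most 2^{2r} elements; since this set is the F₂-kernel of the matrix Σ_{t=0}^r P^t(a_t), every nonzero matrix in the Delsarte–Goethals set DG(m,r) has rank at least m − 2r over F₂. -/

import Mathlib

noncomputable section

namespace DGPaper

/-- The absolute trace `GF(2^m) → 𝔽₂`. -/
def tr {m : ℕ} (x : GaloisField 2 m) : ZMod 2 :=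
  Algebra.trace (ZMod 2) (GaloisField 2 m) x

/-- Lift a bit to `ℤ₄`. -/
def lift2 (v : ZMod 2) : ZMod 4 := (v.val : ZMod 4)

/-- `i^v` for `v ∈ ℤ₄`. -/
def zeta (v : ZMod 4) : ℂ := Complex.I ^ v.val

/-- The field element of `GF(2^m)` associated to a binary `m`-tuple via the basis
`1, ξ, …, ξ^{m-1}`. -/
def fld {m : ℕ} (ξ : GaloisField 2 m) (x : Fin m → ZMod 2) : GaloisField 2 m :=
  ∑ j : Fin m, x j • ξ ^ (j : ℕ)

/-- The binary symmetric matrix `P^t(a)`: for `t = 0` it represents the bilinear form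
`(x,y) ↦ Tr(x y a)`, and for `t ≥ 1` the (zero-diagonal) form
`(x,y) ↦ Tr((x y^{2^t} + x^{2^t} y) a)`, in the basis `1, ξ, …, ξ^{m-1}` of `GF(2^m)`
over `𝔽₂`. -/
def Pmat {m : ℕ} (ξ : GaloisField 2 m) (t : ℕ) (a : GaloisField 2 m) :
    Matrix (Fin m) (Fin m) (ZMod 2) :=
  Matrix.of fun i j =>
    if t = 0 then tr (ξ ^ (i : ℕ) * ξ ^ (j : ℕ) * a)
    else tr ((ξ ^ (i : ℕ) * (ξ ^ (j : ℕ)) ^ (2 ^ t) + (ξ ^ (i : ℕ)) ^ (2 ^ t) * ξ ^ (j : ℕ)) * a)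

/-- The quadratic form `x P xᵀ` evaluated in `ℤ₄` (the `0/1` entries of `P` and `x`
being lifted to `ℤ₄`). -/
def qform {m : ℕ} (P : Matrix (Fin m) (Fin m) (ZMod 2)) (x : Fin m → ZMod 2) : ZMod 4 :=
  ∑ i : Fin m, ∑ j : Fin m, lift2 (x i) * lift2 (P i j) * lift2 (x j)

instance {m : ℕ} : Fintype (GaloisField 2 m) := Fintype.ofFinite _

variable {m : ℕ}
open Polynomial


def frobAE (m : ℕ) : GaloisField 2 m ≃ₐ[ZMod 2] GaloisField 2 m :=
  AlgEquiv.ofRingEquiv (f := frobeniusEquiv (GaloisField 2 m) 2)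
    (fun r => by
      have : (algebraMap (ZMod 2) (GaloisField 2 m) r) ^ (2:ℕ)
          = algebraMap (ZMod 2) (GaloisField 2 m) (r ^ (2:ℕ)) := by
        rw [map_pow]
      rw [show frobeniusEquiv (GaloisField 2 m) 2 ((algebraMap (ZMod 2) (GaloisField 2 m)) r) = (algebraMap (ZMod 2) (GaloisField 2 m)) r ^ (2:ℕ) from rfl, this, ZMod.pow_card])

lemma tr_sq (x : GaloisField 2 m) : tr (x ^ (2:ℕ)) = tr x := by
  have h2 := trace_eq_sum_automorphisms (K := ZMod 2) (x ^ (2:ℕ))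
  have h1 := trace_eq_sum_automorphisms (K := ZMod 2) x
  have hinj : Function.Injective (algebraMap (ZMod 2) (GaloisField 2 m)) :=
    (algebraMap (ZMod 2) (GaloisField 2 m)).injective
  apply hinj
  rw [tr, tr, h1, h2]
  have : ∀ σ : GaloisField 2 m ≃ₐ[ZMod 2] GaloisField 2 m,
      σ (x ^ (2:ℕ)) = (σ * frobAE m) x := fun σ => by
    rw [AlgEquiv.mul_apply]
    rw [show (frobAE m) x = x ^ (2:ℕ) from rfl]
  simp_rw [this]
  exact Fintype.sum_equiv (Equiv.mulRight (frobAE m)) _ _ (fun σ => rfl)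

lemma tr_pow_pow (k : ℕ) (x : GaloisField 2 m) : tr (x ^ (2:ℕ) ^ k) = tr x := by
  induction k with
  | zero => simp
  | succ k ih => rw [pow_succ, pow_mul, tr_sq (x ^ (2:ℕ)^k), ih]

lemma tr_nondeg {c : GaloisField 2 m} (h : ∀ y, tr (c * y) = 0) : c = 0 := by
  by_contra hc
  have := (traceForm_nondegenerate (ZMod 2) (GaloisField 2 m)).1 c
  simp_rw [Algebra.traceForm_apply] at this
  exact hc (this h)


lemma gf_pow_card_pow (hm : 0 < m) (t : ℕ) (x : GaloisField 2 m) :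
    x ^ (2:ℕ) ^ (t * m) = x := by
  have hc : Fintype.card (GaloisField 2 m) = 2 ^ m := by
    rw [← Nat.card_eq_fintype_card, GaloisField.card 2 m hm.ne']
  have := FiniteField.pow_card_pow t x
  rw [hc, ← pow_mul] at this
  rwa [mul_comm (t:ℕ) m]

/-- the linearized map whose kernel is the radical -/
def cmap {m : ℕ} (r : ℕ) (a : Fin (r+1) → GaloisField 2 m) (x : GaloisField 2 m) :
    GaloisField 2 m :=
  a 0 * x + ∑ t ∈ Finset.Ioi (0 : Fin (r+1)),
    (a t * x ^ (2:ℕ) ^ (t:ℕ) + (a t * x) ^ (2:ℕ) ^ ((t:ℕ) * (m-1)))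

/-- the associated ordinary polynomial: `(cmap x)^{2^r} = eval x (cpoly)` -/
def cpoly {m : ℕ} (r : ℕ) (a : Fin (r+1) → GaloisField 2 m) : (GaloisField 2 m)[X] :=
  C (a 0 ^ (2:ℕ)^r) * X ^ ((2:ℕ)^r) + ∑ t ∈ Finset.Ioi (0 : Fin (r+1)),
    (C (a t ^ (2:ℕ)^r) * X ^ ((2:ℕ) ^ (r + (t:ℕ)))
      + C ((a t) ^ ((2:ℕ) ^ ((t:ℕ) * (m-1)) * 2^r)) * X ^ ((2:ℕ) ^ (r - (t:ℕ))))

lemma cpoly_eval (hm : 0 < m) (r : ℕ) (a : Fin (r+1) → GaloisField 2 m)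
    (x : GaloisField 2 m) : eval x (cpoly r a) = (cmap r a x) ^ (2:ℕ)^r := by
  have hchar : (2:ℕ).Prime := Nat.prime_two
  rw [cmap, add_pow_char_pow]
  rw [sum_pow_char_pow]
  rw [cpoly]
  simp only [eval_add, eval_mul, eval_pow, eval_C, eval_X, eval_finset_sum]
  congr 1
  · rw [mul_pow]
  · apply Finset.sum_congr rfl
    intro t ht
    have htr : (t:ℕ) ≤ r := Nat.lt_succ_iff.mp t.isLt
    have hexp : (t:ℕ) * (m-1) + r = (t:ℕ) * m + (r - (t:ℕ)) := by
      obtain ⟨k, rfl⟩ : ∃ k, m = k + 1 := ⟨m - 1, by omega⟩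
      rw [Nat.add_sub_cancel, Nat.mul_add, Nat.mul_one]
      omega
    rw [add_pow_char_pow]
    congr 1
    · rw [mul_pow, ← pow_mul, ← pow_add, add_comm r (t:ℕ)]
    · rw [← pow_mul, mul_pow]
      congr 1
      rw [← pow_add, hexp, pow_add, pow_mul, gf_pow_card_pow hm]

lemma two_pow_inj : Function.Injective (fun n : ℕ => (2:ℕ) ^ n) :=
  fun _ _ h => Nat.pow_right_injective (le_refl 2) h

lemma cpoly_coeff (r : ℕ) (a : Fin (r+1) → GaloisField 2 m) (t : Fin (r+1)) :
    (cpoly r a).coeff ((2:ℕ) ^ (r + (t:ℕ))) = a t ^ (2:ℕ)^r := by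
  have htr : (t:ℕ) ≤ r := Nat.lt_succ_iff.mp t.isLt
  rw [cpoly, coeff_add, finset_sum_coeff]
  simp only [coeff_add, coeff_C_mul, coeff_X_pow]
  by_cases ht0 : t = 0
  · subst ht0
    simp only [Fin.val_zero, add_zero]
    rw [Finset.sum_eq_zero, add_zero]
    · simp
    intro s hs
    have hs0 : (0:ℕ) < (s:ℕ) := by
      rw [Finset.mem_Ioi] at hs
      exact_mod_cast hs
    have hsr : (s:ℕ) ≤ r := Nat.lt_succ_iff.mp s.isLt
    rw [if_neg, if_neg, mul_zero, mul_zero, add_zero]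
    · intro h
      have := two_pow_inj h
      omega
    · intro h
      have := two_pow_inj h
      omega
  · have htpos : (0:ℕ) < (t:ℕ) := Nat.pos_of_ne_zero (fun h => ht0 (Fin.ext h))
    rw [if_neg, mul_zero, zero_add]
    · rw [Finset.sum_eq_single t]
      · rw [if_pos rfl, if_neg, mul_one, mul_zero, add_zero]
        intro h
        have := two_pow_inj h
        omega
      · intro s hs hst
        have hs0 : (0:ℕ) < (s:ℕ) := by
          rw [Finset.mem_Ioi] at hs
          exact_mod_cast hs
        have hsr : (s:ℕ) ≤ r := Nat.lt_succ_iff.mp s.isLt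
        have hne : (s:ℕ) ≠ (t:ℕ) := fun h => hst (Fin.ext h)
        rw [if_neg, if_neg, mul_zero, mul_zero, add_zero]
        · intro h
          have := two_pow_inj h
          omega
        · intro h
          have := two_pow_inj h
          omega
      · intro h
        exact absurd (Finset.mem_Ioi.mpr (by exact_mod_cast htpos)) h
    · intro h
      have := two_pow_inj h
      omega

lemma cpoly_natDegree_le (r : ℕ) (a : Fin (r+1) → GaloisField 2 m) :
    (cpoly r a).natDegree ≤ 2 ^ (2 * r) := by
  have h1 : ∀ (c : GaloisField 2 m) (n : ℕ), n ≤ 2^(2*r) →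
      (C c * X ^ n : (GaloisField 2 m)[X]).natDegree ≤ 2^(2*r) := by
    intro c n hn
    refine le_trans (natDegree_C_mul_le _ _) ?_
    simpa using hn
  refine le_trans (natDegree_add_le _ _) (max_le ?_ ?_)
  · exact h1 _ _ (Nat.pow_le_pow_right (by norm_num) (by omega))
  · refine le_trans (natDegree_sum_le _ _) ?_
    rw [Finset.fold_max_le]
    refine ⟨by positivity, ?_⟩
    intro t ht
    have htr : (t:ℕ) ≤ r := Nat.lt_succ_iff.mp t.isLt
    refine le_trans (natDegree_add_le _ _) (max_le ?_ ?_)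
    · exact h1 _ _ (Nat.pow_le_pow_right (by norm_num) (by omega))
    · exact h1 _ _ (Nat.pow_le_pow_right (by norm_num) (by omega))

lemma tr_add (x y : GaloisField 2 m) : tr (x + y) = tr x + tr y :=
  map_add (Algebra.trace (ZMod 2) (GaloisField 2 m)) x y

lemma tr_sum {ι : Type*} (s : Finset ι) (f : ι → GaloisField 2 m) :
    tr (∑ i ∈ s, f i) = ∑ i ∈ s, tr (f i) :=
  map_sum (Algebra.trace (ZMod 2) (GaloisField 2 m)) f s

lemma tr_twist (hm : 0 < m) (t : ℕ) (z y : GaloisField 2 m) :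
    tr (z ^ (2:ℕ) ^ (t * (m-1)) * y) = tr (z * y ^ (2:ℕ) ^ t) := by
  have hexp : t * (m-1) + t = t * m := by
    obtain ⟨k, rfl⟩ : ∃ k, m = k + 1 := ⟨m - 1, by omega⟩
    rw [Nat.add_sub_cancel, Nat.mul_add, Nat.mul_one]
  rw [← tr_pow_pow t (z ^ (2:ℕ) ^ (t * (m-1)) * y), mul_pow, ← pow_mul, ← pow_add, hexp,
    gf_pow_card_pow hm]

lemma tr_G (hm : 0 < m) (r : ℕ) (a : Fin (r+1) → GaloisField 2 m)
    (x y : GaloisField 2 m) :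
    tr (a 0 * x * y + ∑ t ∈ Finset.Ioi (0 : Fin (r+1)),
        a t * (x * y ^ (2:ℕ) ^ (t:ℕ) + x ^ (2:ℕ) ^ (t:ℕ) * y))
      = tr (cmap r a x * y) := by
  rw [cmap, add_mul, Finset.sum_mul, tr_add, tr_add]
  congr 1
  rw [tr_sum, tr_sum]
  apply Finset.sum_congr rfl
  intro t ht
  rw [mul_add, add_mul, tr_add, tr_add, tr_twist hm (t:ℕ) (a t * x) y, add_comm]
  congr 2 <;> ring

lemma radical_card_le (hm : 0 < m) (r : ℕ) (a : Fin (r+1) → GaloisField 2 m)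
    (ha : a ≠ 0) :
    {x : GaloisField 2 m |
        ∀ y : GaloisField 2 m,
          tr (a 0 * x * y +
              ∑ t ∈ Finset.Ioi (0 : Fin (r + 1)),
                a t * (x * y ^ 2 ^ (t : ℕ) + x ^ 2 ^ (t : ℕ) * y)) = 0}.ncard
        ≤ 2 ^ (2 * r) := by
  classical
  obtain ⟨t₀, ht₀⟩ := Function.ne_iff.mp ha
  have hpne : cpoly r a ≠ 0 := by
    intro h
    have := cpoly_coeff r a t₀
    rw [h, coeff_zero] at this
    exact pow_ne_zero _ (by simpa using ht₀) this.symm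
  have hsub : {x : GaloisField 2 m |
        ∀ y : GaloisField 2 m,
          tr (a 0 * x * y +
              ∑ t ∈ Finset.Ioi (0 : Fin (r + 1)),
                a t * (x * y ^ 2 ^ (t : ℕ) + x ^ 2 ^ (t : ℕ) * y)) = 0}
      ⊆ ((cpoly r a).roots.toFinset : Set (GaloisField 2 m)) := by
    intro x hx
    have hc : cmap r a x = 0 := by
      apply tr_nondeg
      intro y
      rw [← tr_G hm r a x y]
      exact hx y
    refine Finset.mem_coe.mpr (Multiset.mem_toFinset.mpr ?_)
    rw [Polynomial.mem_roots hpne, Polynomial.IsRoot.def, cpoly_eval hm, hc]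
    simp
  calc _ ≤ (((cpoly r a).roots.toFinset : Set (GaloisField 2 m))).ncard :=
        Set.ncard_le_ncard hsub (Set.toFinite _)
    _ = (cpoly r a).roots.toFinset.card := Set.ncard_coe_finset _
    _ ≤ Multiset.card (cpoly r a).roots := Multiset.toFinset_card_le _
    _ ≤ (cpoly r a).natDegree := (cpoly r a).card_roots'
    _ ≤ 2 ^ (2 * r) := cpoly_natDegree_le r a


lemma tr_smul (c : ZMod 2) (x : GaloisField 2 m) : tr (c • x) = c * tr x := by
  rw [tr, map_smul, smul_eq_mul, tr]

/-- the bilinear expression -/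
def Gexpr {m : ℕ} (r : ℕ) (a : Fin (r+1) → GaloisField 2 m) (x y : GaloisField 2 m) :
    GaloisField 2 m :=
  a 0 * x * y + ∑ t ∈ Finset.Ioi (0 : Fin (r+1)),
    a t * (x * y ^ 2 ^ (t:ℕ) + x ^ 2 ^ (t:ℕ) * y)

lemma smul_pow_char (c : ZMod 2) (w : GaloisField 2 m) (k : ℕ) :
    (c • w) ^ (2:ℕ) ^ k = c • w ^ (2:ℕ) ^ k := by
  rw [Algebra.smul_def, mul_pow, ← map_pow, ZMod.pow_card_pow, Algebra.smul_def]

lemma fin_sum_split {M : Type*} [AddCommMonoid M] {n : ℕ} (f : Fin (n+1) → M) :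
    ∑ t, f t = f 0 + ∑ t ∈ Finset.Ioi 0, f t := by
  have h : Finset.Ioi (0 : Fin (n+1)) = Finset.univ.erase 0 := by
    ext t
    simp [Fin.pos_iff_ne_zero]
  rw [h, Finset.add_sum_erase _ f (Finset.mem_univ 0)]

lemma Gexpr_fld (r : ℕ) (a : Fin (r+1) → GaloisField 2 m) (ξ : GaloisField 2 m)
    (v : Fin m → ZMod 2) (y : GaloisField 2 m) :
    Gexpr r a (fld ξ v) y = ∑ j : Fin m, v j • Gexpr r a (ξ ^ (j:ℕ)) y := by
  unfold Gexpr fld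
  simp only [sum_pow_char_pow, smul_pow_char]
  simp only [Finset.mul_sum, Finset.sum_mul, smul_mul_assoc, mul_smul_comm, mul_add, add_mul,
    smul_add, Finset.smul_sum, Finset.sum_add_distrib]
  congr 1
  congr 1
  · exact Finset.sum_comm
  · exact Finset.sum_comm

lemma tr_Gexpr_pow (r : ℕ) (a : Fin (r+1) → GaloisField 2 m) (ξ : GaloisField 2 m)
    (i j : Fin m) :
    tr (Gexpr r a (ξ ^ (j:ℕ)) (ξ ^ (i:ℕ))) = ∑ t : Fin (r+1), Pmat ξ (t:ℕ) (a t) i j := by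
  rw [fin_sum_split (fun t : Fin (r+1) => Pmat ξ (t:ℕ) (a t) i j)]
  rw [Gexpr, tr_add, tr_sum]
  congr 1
  · show tr (a 0 * ξ ^ (j:ℕ) * ξ ^ (i:ℕ)) = Pmat ξ ((0 : Fin (r+1)):ℕ) (a 0) i j
    rw [Pmat]
    simp only [Fin.val_zero, Matrix.of_apply, if_pos rfl]
    congr 1
    ring
  · apply Finset.sum_congr rfl
    intro t ht
    have htpos : (t:ℕ) ≠ 0 := by
      have h2 := Finset.mem_Ioi.mp ht
      rw [Fin.lt_def] at h2
      simpa using h2.ne'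
    rw [Pmat]
    simp only [Matrix.of_apply, if_neg htpos]
    congr 1
    ring

lemma mulVec_eq_tr (r : ℕ) (a : Fin (r+1) → GaloisField 2 m) (ξ : GaloisField 2 m)
    (v : Fin m → ZMod 2) (i : Fin m) :
    (∑ t : Fin (r+1), Pmat ξ (t:ℕ) (a t)).mulVec v i
      = tr (Gexpr r a (fld ξ v) (ξ ^ (i:ℕ))) := by
  rw [Gexpr_fld, tr_sum]
  simp only [tr_smul, tr_Gexpr_pow]
  rw [Matrix.mulVec, dotProduct]
  apply Finset.sum_congr rfl
  intro j _
  rw [Matrix.sum_apply, mul_comm]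

lemma Gexpr_zero (r : ℕ) (a : Fin (r+1) → GaloisField 2 m) (x : GaloisField 2 m) :
    Gexpr r a x 0 = 0 := by
  have h2 : ∀ t : ℕ, (0 : GaloisField 2 m) ^ 2 ^ t = 0 :=
    fun t => zero_pow (by positivity)
  simp [Gexpr, h2]

lemma Gexpr_add (r : ℕ) (a : Fin (r+1) → GaloisField 2 m) (x y z : GaloisField 2 m) :
    Gexpr r a x (y + z) = Gexpr r a x y + Gexpr r a x z := by
  unfold Gexpr
  have h : ∀ t ∈ Finset.Ioi (0 : Fin (r+1)),
      a t * (x * (y + z) ^ 2 ^ (t:ℕ) + x ^ 2 ^ (t:ℕ) * (y + z))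
        = a t * (x * y ^ 2 ^ (t:ℕ) + x ^ 2 ^ (t:ℕ) * y)
          + a t * (x * z ^ 2 ^ (t:ℕ) + x ^ 2 ^ (t:ℕ) * z) := by
    intro t _
    rw [add_pow_char_pow]
    ring
  rw [Finset.sum_congr rfl h, Finset.sum_add_distrib]
  ring

lemma radical_mem_of_mulVec_zero (hm : 0 < m) (r : ℕ)
    (a : Fin (r+1) → GaloisField 2 m) (ξ : GaloisField 2 m)
    (hξ : LinearIndependent (ZMod 2) fun j : Fin m => ξ ^ (j : ℕ))
    (v : Fin m → ZMod 2)
    (hv : (∑ t : Fin (r+1), Pmat ξ (t:ℕ) (a t)).mulVec v = 0) :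
    ∀ y : GaloisField 2 m, tr (Gexpr r a (fld ξ v) y) = 0 := by
  intro y
  have hfr : Module.finrank (ZMod 2) (GaloisField 2 m) = m := GaloisField.finrank 2 hm.ne'
  haveI : Nonempty (Fin m) := ⟨⟨0, hm⟩⟩
  have hspan : Submodule.span (ZMod 2) (Set.range fun j : Fin m => ξ ^ (j : ℕ)) = ⊤ := by
    apply hξ.span_eq_top_of_card_eq_finrank
    simp [hfr]
  have hy : y ∈ Submodule.span (ZMod 2) (Set.range fun j : Fin m => ξ ^ (j : ℕ)) := by
    rw [hspan]; trivial
  induction hy using Submodule.span_induction with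
  | mem w hw =>
    obtain ⟨i, rfl⟩ := hw
    rw [← mulVec_eq_tr]
    rw [hv]
    rfl
  | zero => rw [Gexpr_zero]; exact map_zero (Algebra.trace (ZMod 2) (GaloisField 2 m))
  | add y z _ _ hy hz => rw [Gexpr_add, tr_add, hy, hz, add_zero]
  | smul c y _ hy =>
    rcases (show c = 0 ∨ c = 1 by revert c; decide) with rfl | rfl
    · rw [zero_smul, Gexpr_zero]
      exact map_zero (Algebra.trace (ZMod 2) (GaloisField 2 m))
    · rwa [one_smul]

lemma fld_injective (ξ : GaloisField 2 m)
    (hξ : LinearIndependent (ZMod 2) fun j : Fin m => ξ ^ (j : ℕ)) :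
    Function.Injective (fld ξ) := by
  intro v w h
  have hsub : ∑ j : Fin m, (v - w) j • ξ ^ (j:ℕ) = 0 := by
    simp only [Pi.sub_apply, sub_smul, Finset.sum_sub_distrib]
    rw [sub_eq_zero]
    exact h
  have := Fintype.linearIndependent_iff.mp hξ (v - w) hsub
  funext j
  have hj := this j
  rw [Pi.sub_apply, sub_eq_zero] at hj
  exact hj

lemma rank_part (hm : 0 < m) (r : ℕ) (a : Fin (r+1) → GaloisField 2 m)
    (ξ : GaloisField 2 m)
    (hξ : LinearIndependent (ZMod 2) fun j : Fin m => ξ ^ (j : ℕ))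
    (hcard : {x : GaloisField 2 m |
        ∀ y : GaloisField 2 m,
          tr (a 0 * x * y +
              ∑ t ∈ Finset.Ioi (0 : Fin (r + 1)),
                a t * (x * y ^ 2 ^ (t : ℕ) + x ^ 2 ^ (t : ℕ) * y)) = 0}.ncard
        ≤ 2 ^ (2 * r)) :
    m - 2 * r ≤ (∑ t : Fin (r + 1), Pmat ξ (t : ℕ) (a t)).rank := by
  classical
  set M := ∑ t : Fin (r + 1), Pmat ξ (t : ℕ) (a t) with hM
  set S := {x : GaloisField 2 m |
        ∀ y : GaloisField 2 m,
          tr (a 0 * x * y +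
              ∑ t ∈ Finset.Ioi (0 : Fin (r + 1)),
                a t * (x * y ^ 2 ^ (t : ℕ) + x ^ 2 ^ (t : ℕ) * y)) = 0} with hS
  set K := LinearMap.ker M.mulVecLin with hK
  have hg : ∀ v : K, fld ξ v.1 ∈ S := by
    rintro ⟨v, hv⟩
    have hv' : M.mulVec v = 0 := hv
    intro y
    exact radical_mem_of_mulVec_zero hm r a ξ hξ v hv' y
  have hinj : Function.Injective (fun v : K => (⟨fld ξ v.1, hg v⟩ : S)) := by
    intro v w h
    exact Subtype.ext (fld_injective ξ hξ (congrArg Subtype.val h))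
  have hle : Nat.card K ≤ Nat.card S := Nat.card_le_card_of_injective _ hinj
  haveI : Fintype K := Fintype.ofFinite _
  have hcardK : Nat.card K = 2 ^ Module.finrank (ZMod 2) K := by
    rw [Nat.card_eq_fintype_card, Module.card_eq_pow_finrank (K := ZMod 2) (V := K), ZMod.card 2]
  have hScard : Nat.card S = S.ncard := Nat.card_coe_set_eq S
  have hfr : Module.finrank (ZMod 2) K ≤ 2 * r := by
    have h2 : 2 ^ Module.finrank (ZMod 2) K ≤ 2 ^ (2 * r) := by
      rw [← hcardK]
      exact le_trans hle (by rw [hScard]; exact hcard)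
    exact (Nat.pow_le_pow_iff_right (by norm_num)).mp h2
  have hrn := LinearMap.finrank_range_add_finrank_ker M.mulVecLin
  rw [Module.finrank_fin_fun] at hrn
  have hrank : M.rank = Module.finrank (ZMod 2) (LinearMap.range M.mulVecLin) := rfl
  rw [← hK] at hrn
  rw [hrank]
  omega

/-- For `F = GF(2^m)` and `a₀, …, a_r ∈ F` not all zero, the radical
`{x ∈ F : Tr(a₀ x y + ∑_{t=1}^r a_t (x y^{2^t} + x^{2^t} y)) = 0 for all y}` has at most
`2^{2r}` elements; since this set is the `𝔽₂`-kernel of the matrix `∑_{t=0}^r P^t(a_t)`,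
every nonzero matrix in the Delsarte–Goethals set `DG(m, r)` has rank at least `m - 2r`
over `𝔽₂`. -/
theorem delsarteGoethals_matrix_rank_ge
    (m r : ℕ) (hm : 0 < m)
    (ξ : GaloisField 2 m)
    (hξ : LinearIndependent (ZMod 2) fun j : Fin m => ξ ^ (j : ℕ))
    (a : Fin (r + 1) → GaloisField 2 m) (ha : a ≠ 0) :
    {x : GaloisField 2 m |
        ∀ y : GaloisField 2 m,
          tr (a 0 * x * y +
              ∑ t ∈ Finset.Ioi (0 : Fin (r + 1)),
                a t * (x * y ^ 2 ^ (t : ℕ) + x ^ 2 ^ (t : ℕ) * y)) = 0}.ncard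
        ≤ 2 ^ (2 * r) ∧
      ((∑ t : Fin (r + 1), Pmat ξ (t : ℕ) (a t)) ≠ 0 →
        m - 2 * r ≤ (∑ t : Fin (r + 1), Pmat ξ (t : ℕ) (a t)).rank) := by
  exact ⟨radical_card_le hm r a ha,
    fun _ => rank_part hm r a ξ hξ (radical_card_le hm r a ha)⟩
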